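/- Let d ≥ 0 and let K have characteristic zero or odd prime characteristic greater than d. Let A ∈ Mat_{d+1}(K) be lower bidiagonal with A_{ii} = d - 2i and A_{i,i-1} = -i, and let A* be upper bidiagonal with A*_{ii} = d - 2i and A*_{i-1,i} = 2(d - i + 1). Then A, A* is a Leonard pair in Mat_{d+1}(K). -/
import Mathlib


open Polynomial Matrix Finset

variable {K : Type*} [Field K]

/-- The primitive idempotent of `A` associated with eigenvalue `θ i`:
`E i = ∏_{j ≠ i} (A - θ j • 1) / (θ i - θ j)`. -/
noncomputable def primIdem {d : ℕ} (A : Matrix (Fin (d + 1)) (Fin (d + 1)) K)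
    (θ : Fin (d + 1) → K) (i : Fin (d + 1)) : Matrix (Fin (d + 1)) (Fin (d + 1)) K :=
  Polynomial.aeval A
    (∏ j ∈ Finset.univ.erase i,
      (Polynomial.C (θ i - θ j)⁻¹ * (Polynomial.X - Polynomial.C (θ j))))

/-- `A` is multiplicity-free with (distinct) eigenvalues `θ 0, …, θ d`. -/
def MultFreeWith {d : ℕ} (A : Matrix (Fin (d + 1)) (Fin (d + 1)) K)
    (θ : Fin (d + 1) → K) : Prop :=
  Function.Injective θ ∧ A.charpoly = ∏ i, (Polynomial.X - Polynomial.C (θ i))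

/-- `θ` is an eigenvalue sequence for the (ordered) pair `A, B`: the corresponding
ordering of the primitive idempotents of `A` is an idempotent sequence for `A, B`. -/
def IsEigenvalueSeq {d : ℕ} (A B : Matrix (Fin (d + 1)) (Fin (d + 1)) K)
    (θ : Fin (d + 1) → K) : Prop :=
  MultFreeWith A θ ∧
    ∀ i j : Fin (d + 1),
      (1 < |((i : ℕ) : ℤ) - ((j : ℕ) : ℤ)| → primIdem A θ i * B * primIdem A θ j = 0) ∧
      (|((i : ℕ) : ℤ) - ((j : ℕ) : ℤ)| = 1 → primIdem A θ i * B * primIdem A θ j ≠ 0)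

/-- `A, B` is a Leonard pair in `Mat_{d+1}(K)`. -/
def IsLeonardPair {d : ℕ} (A B : Matrix (Fin (d + 1)) (Fin (d + 1)) K) : Prop :=
  (∃ θ, IsEigenvalueSeq A B θ) ∧ (∃ θs, IsEigenvalueSeq B A θs)

-- conjugation commutes with aeval
lemma aeval_conj {n : Type*} [Fintype n] [DecidableEq n]
    (P X : Matrix n n K) [Invertible P] (q : K[X]) :
    aeval (P * X * ⅟P) q = P * aeval X q * ⅟P := by
  induction q using Polynomial.induction_on' with
  | add p q hp hq => rw [map_add, map_add, hp, hq, Matrix.mul_add, Matrix.add_mul]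
  | monomial n a =>
      have hpow : ∀ m : ℕ, (P * X * ⅟P) ^ m = P * X ^ m * ⅟P := by
        intro m
        induction m with
        | zero => rw [pow_zero, pow_zero, Matrix.mul_one, mul_invOf_self]
        | succ m ih =>
            rw [pow_succ, ih, pow_succ]
            calc P * X ^ m * ⅟P * (P * X * ⅟P)
                = P * X ^ m * (⅟P * P) * X * ⅟P := by
                  simp only [Matrix.mul_assoc]
              _ = P * (X ^ m * X) * ⅟P := by
                  rw [invOf_mul_self]; simp only [Matrix.mul_one, Matrix.mul_assoc]
      rw [aeval_monomial, aeval_monomial, hpow, ← Matrix.mul_assoc, ← Matrix.mul_assoc,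
        Algebra.commutes a P, Matrix.mul_assoc P, Matrix.mul_assoc P]

lemma aeval_diag {n : Type*} [Fintype n] [DecidableEq n]
    (θ : n → K) (q : K[X]) :
    aeval (Matrix.diagonal θ) q = Matrix.diagonal (fun k => Polynomial.eval (θ k) q) := by
  induction q using Polynomial.induction_on' with
  | add p q hp hq => simp [map_add, hp, hq, Matrix.diagonal_add]
  | monomial n a =>
      simp [aeval_monomial, Matrix.diagonal_pow, algebraMap_eq_diagonal,
        Matrix.diagonal_mul_diagonal]

lemma isEigenvalueSeq_of {d : ℕ} (A B P T : Matrix (Fin (d+1)) (Fin (d+1)) K)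
    (θ : Fin (d+1) → K) [Invertible P]
    (hinj : Function.Injective θ)
    (hcp : A.charpoly = ∏ i, (Polynomial.X - Polynomial.C (θ i)))
    (hAP : A * P = P * Matrix.diagonal θ)
    (hBP : B * P = P * T)
    (hT0 : ∀ i j : Fin (d+1), 1 < |((i:ℕ):ℤ) - ((j:ℕ):ℤ)| → T i j = 0)
    (hT1 : ∀ i j : Fin (d+1), |((i:ℕ):ℤ) - ((j:ℕ):ℤ)| = 1 → T i j ≠ 0) :
    IsEigenvalueSeq A B θ := by
  have hA : A = P * Matrix.diagonal θ * ⅟P := by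
    rw [← hAP, Matrix.mul_assoc, mul_invOf_self, Matrix.mul_one]
  have hE : ∀ i, primIdem A θ i =
      P * Matrix.diagonal (fun k => if k = i then (1:K) else 0) * ⅟P := by
    intro i
    rw [primIdem, hA, _root_.aeval_conj, aeval_diag]
    have hfun : (fun k => Polynomial.eval (θ k) (∏ j ∈ Finset.univ.erase i,
        (Polynomial.C (θ i - θ j)⁻¹ * (Polynomial.X - Polynomial.C (θ j))))) =
        (fun k => if k = i then (1:K) else 0) := by
      funext k
      rw [eval_prod]
      by_cases hk : k = i
      · subst hk
        rw [if_pos rfl]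
        apply Finset.prod_eq_one
        intro j hj
        have hne : θ k - θ j ≠ 0 :=
          sub_ne_zero.mpr (fun h => (Finset.mem_erase.mp hj).1 (hinj h).symm)
        simp [eval_mul, eval_sub, inv_mul_cancel₀ hne]
      · rw [if_neg hk]
        apply Finset.prod_eq_zero (Finset.mem_erase.mpr ⟨hk, Finset.mem_univ k⟩)
        simp
    rw [hfun]
  have hBP' : ⅟P * (B * P) = T := by
    rw [hBP, ← Matrix.mul_assoc, invOf_mul_self, Matrix.one_mul]
  have key : ∀ i j, primIdem A θ i * B * primIdem A θ j =
      P * Matrix.single i j (T i j) * ⅟P := by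
    intro i j
    rw [hE i, hE j]
    have h1 : (P * Matrix.diagonal (fun k => if k = i then (1:K) else 0) * ⅟P) * B *
        (P * Matrix.diagonal (fun k => if k = j then (1:K) else 0) * ⅟P) =
        P * (Matrix.diagonal (fun k => if k = i then (1:K) else 0) * ((⅟P * (B * P)) *
          Matrix.diagonal (fun k => if k = j then (1:K) else 0))) * ⅟P := by
      simp only [Matrix.mul_assoc]
    rw [h1, hBP']
    congr 1
    congr 1
    ext a b
    rw [Matrix.diagonal_mul, Matrix.mul_diagonal]
    have hs : Matrix.single i j (T i j) a b = if a = i ∧ b = j then T i j else 0 := by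
      simp only [Matrix.single, Matrix.of_apply]
      exact if_congr ⟨fun h => ⟨h.1.symm, h.2.symm⟩, fun h => ⟨h.1.symm, h.2.symm⟩⟩ rfl rfl
    rw [hs]
    by_cases ha : a = i <;> by_cases hb : b = j <;> simp [ha, hb]
  constructor
  · exact ⟨hinj, hcp⟩
  · intro i j
    constructor
    · intro hgt
      rw [key, hT0 i j hgt]
      simp
    · intro heq h0
      rw [key] at h0
      have e1 : ⅟P * (P * Matrix.single i j (T i j) * ⅟P) * P =
          Matrix.single i j (T i j) := by
        have h2 : ⅟P * (P * Matrix.single i j (T i j) * ⅟P) * P =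
            ⅟P * (P * (Matrix.single i j (T i j) * (⅟P * P))) := by
          simp only [Matrix.mul_assoc]
        rw [h2, invOf_mul_self, Matrix.mul_one, ← Matrix.mul_assoc, invOf_mul_self,
          Matrix.one_mul]
      rw [h0] at e1
      simp only [Matrix.mul_zero, Matrix.zero_mul] at e1
      have : T i j = 0 := by
        have := congrFun (congrFun e1.symm i) j
        simpa using this
      exact hT1 i j heq this

/-- The scaled eigenvector entries. -/
noncomputable def peF (K : Type*) [Field K] (k j : ℕ) : K :=
  (-1)^(k+j) * (Nat.choose k j : K) * ((2:K)⁻¹)^k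

lemma cast_choose_R1 (k j : ℕ) :
    ((j:K)+1) * (Nat.choose k (j+1) : K) = ((k:K)-(j:K)) * (Nat.choose k j : K) := by
  rcases le_or_gt j k with h | h
  · have hn := Nat.choose_succ_right_eq k j
    have := congrArg (Nat.cast : ℕ → K) hn
    push_cast [Nat.cast_sub h] at this
    linear_combination this
  · rw [Nat.choose_eq_zero_of_lt h, Nat.choose_eq_zero_of_lt (lt_trans h (Nat.lt_succ_self j))]
    ring

lemma cast_choose_NB (m j : ℕ) :
    ((m:K)+1) * (Nat.choose m j : K) = (((m:K)+1)-(j:K)) * (Nat.choose (m+1) j : K) := by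
  rcases le_or_gt j (m+1) with h | h
  · have hn := Nat.choose_mul_succ_eq m j
    have := congrArg (Nat.cast : ℕ → K) hn
    push_cast [Nat.cast_sub h] at this
    linear_combination this
  · rw [Nat.choose_eq_zero_of_lt h, Nat.choose_eq_zero_of_lt (lt_trans (Nat.lt_succ_self m) h)]
    ring

lemma cast_pascal (k j : ℕ) :
    (Nat.choose (k+1) (j+1) : K) = (Nat.choose k j : K) + (Nat.choose k (j+1) : K) := by
  have := Nat.choose_succ_succ k j
  exact_mod_cast congrArg (Nat.cast : ℕ → K) this

/-- eigen-equation for A, k = m+1 case -/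
lemma scalarA (h2 : (2:K) ≠ 0) (dd : K) (m j : ℕ) :
    (dd - 2*((m:K)+1)) * peF K (m+1) j + (-((m:K)+1)) * peF K m j
      = peF K (m+1) j * (dd - 2*(j:K)) := by
  have hx : (2:K) * (2:K)⁻¹ = 1 := mul_inv_cancel₀ h2
  have hnb := cast_choose_NB (K := K) m j
  simp only [peF, pow_add, pow_succ]
  linear_combination (-((-1:K)^m * (-1)^j * ((2:K)⁻¹)^m)) * hnb +
    ((-1:K)^m * (-1)^j * ((2:K)⁻¹)^m * (((m:K)+1)-(j:K)) * (Nat.choose (m+1) j : K)) * hx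

/-- eigen-equation for A, k = 0 case -/
lemma scalarA0 (dd : K) (j : ℕ) :
    (dd - 2*(0:K)) * peF K 0 j = peF K 0 j * (dd - 2*(j:K)) := by
  cases j with
  | zero => simp [peF]
  | succ m => simp [peF, Nat.choose]

/-- key identity, j = 0 case -/
lemma scalarK0 (h2 : (2:K) ≠ 0) (dd : K) (k : ℕ) :
    (dd - 2*(k:K)) * peF K k 0 + 2*(dd - (k:K)) * peF K (k+1) 0
      = peF K k 1 * ((0:K)+1) := by
  have hx : (2:K) * (2:K)⁻¹ = 1 := mul_inv_cancel₀ h2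
  simp only [peF, pow_add, pow_succ, Nat.choose_zero_right, Nat.choose_one_right]
  push_cast
  linear_combination (-((-1:K)^k * ((2:K)⁻¹)^k) * (dd - (k:K))) * hx

/-- key identity, j = m+1 case -/
lemma scalarK (h2 : (2:K) ≠ 0) (dd : K) (k m : ℕ) :
    (dd - 2*(k:K)) * peF K k (m+1) + 2*(dd - (k:K)) * peF K (k+1) (m+1)
      = (dd - ((m:K)+1) + 1) * peF K k m + peF K k (m+2) * (((m:K)+1)+1) := by
  have hx : (2:K) * (2:K)⁻¹ = 1 := mul_inv_cancel₀ h2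
  have hP := cast_pascal (K := K) k m
  have hR1 := cast_choose_R1 (K := K) k m
  have hR2 := cast_choose_R1 (K := K) k (m+1)
  push_cast at hR2
  simp only [peF, pow_add, pow_succ]
  set u : K := (-1:K)^k * (-1)^m with hu
  set v : K := ((2:K)⁻¹)^k with hv
  linear_combination (u*v*(dd-(k:K))*(Nat.choose (k+1) (m+1) : K)) * hx +
    (u*v*(dd-(k:K))) * hP + (-(u*v)) * hR2 + (u*v) * hR1

lemma sum_ite_coe {d : ℕ} (g : Fin (d+1) → K) (c : ℕ) :
    (∑ l : Fin (d+1), if (l:ℕ) = c then g l else 0) =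
      if hc : c < d+1 then g ⟨c, hc⟩ else 0 := by
  split_ifs with hc
  · rw [Finset.sum_eq_single (⟨c, hc⟩ : Fin (d+1))]
    · simp
    · intro l _ hl
      exact if_neg fun h => hl (Fin.ext h)
    · intro h; exact absurd (Finset.mem_univ _) h
  · exact Finset.sum_eq_zero fun l _ => if_neg fun h => hc (by rw [← h]; exact l.isLt)

noncomputable def Pm (d : ℕ) (K : Type*) [Field K] : Matrix (Fin (d+1)) (Fin (d+1)) K :=
  Matrix.of fun k j => peF K (k:ℕ) (j:ℕ)

noncomputable def Tm (d : ℕ) (K : Type*) [Field K] : Matrix (Fin (d+1)) (Fin (d+1)) K :=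
  Matrix.of fun l j => if (l:ℕ)+1 = (j:ℕ) then ((d:K) - ((j:ℕ):K) + 1)
    else if (l:ℕ) = (j:ℕ)+1 then (((l:ℕ):K)) else 0

noncomputable def θf (d : ℕ) (K : Type*) [Field K] : Fin (d+1) → K :=
  fun i => (d:K) - 2*((i:ℕ):K)

lemma hAP_lemma {d : ℕ} (h2 : (2:K) ≠ 0) (A : Matrix (Fin (d+1)) (Fin (d+1)) K)
    (hA : ∀ i j : Fin (d + 1), A i j =
      if (i : ℕ) = (j : ℕ) then (d : K) - 2 * ((i : ℕ) : K)
      else if (i : ℕ) = (j : ℕ) + 1 then -((i : ℕ) : K)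
      else 0) :
    A * Pm d K = Pm d K * Matrix.diagonal (θf d K) := by
  ext k j
  rw [Matrix.mul_apply, Matrix.mul_diagonal]
  have hsum : ∀ l : Fin (d+1), A k l * Pm d K l j =
      (if (l:ℕ) = (k:ℕ) then ((d:K) - 2*((k:ℕ):K)) * peF K (l:ℕ) (j:ℕ) else 0) +
      (if (l:ℕ)+1 = (k:ℕ) then -(((k:ℕ)):K) * peF K (l:ℕ) (j:ℕ) else 0) := by
    intro l
    rw [hA]
    by_cases h1 : (k:ℕ) = (l:ℕ)
    · rw [if_pos h1, if_pos h1.symm, if_neg (by omega), add_zero]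
      simp only [Pm, Matrix.of_apply]
    · by_cases h2' : (k:ℕ) = (l:ℕ)+1
      · rw [if_neg h1, if_pos h2', if_neg (fun h => h1 h.symm), if_pos h2'.symm, zero_add]
        simp only [Pm, Matrix.of_apply]
      · rw [if_neg h1, if_neg h2', if_neg (fun h => h1 h.symm),
          if_neg (fun h => h2' h.symm), zero_mul, add_zero]
  rw [Finset.sum_congr rfl (fun l _ => hsum l), Finset.sum_add_distrib,
    sum_ite_coe, dif_pos k.isLt]
  simp only [Pm, Matrix.of_apply, θf, Fin.val_mk]
  cases hk : (k:ℕ) with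
  | zero =>
      rw [Finset.sum_eq_zero (fun l _ => if_neg (by omega)), add_zero]
      push_cast
      exact scalarA0 (d:K) (j:ℕ)
  | succ m =>
      have hm : m < d + 1 := by have := k.isLt; omega
      simp only [add_left_inj]
      rw [sum_ite_coe, dif_pos hm]
      simp only [Fin.val_mk]
      push_cast
      linear_combination scalarA h2 (d:K) m (j:ℕ)

lemma hAsP_lemma {d : ℕ} (h2 : (2:K) ≠ 0) (Astar : Matrix (Fin (d+1)) (Fin (d+1)) K)
    (hAs : ∀ i j : Fin (d + 1), Astar i j =
      if (i : ℕ) = (j : ℕ) then (d : K) - 2 * ((i : ℕ) : K)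
      else if (j : ℕ) = (i : ℕ) + 1 then 2 * ((d : K) - ((j : ℕ) : K) + 1)
      else 0) :
    Astar * Pm d K = Pm d K * Tm d K := by
  ext k j
  rw [Matrix.mul_apply, Matrix.mul_apply]
  have hsumL : ∀ l : Fin (d+1), Astar k l * Pm d K l j =
      (if (l:ℕ) = (k:ℕ) then ((d:K) - 2*((k:ℕ):K)) * peF K (l:ℕ) (j:ℕ) else 0) +
      (if (l:ℕ) = (k:ℕ)+1 then 2*((d:K) - ((l:ℕ):K) + 1) * peF K (l:ℕ) (j:ℕ) else 0) := by
    intro l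
    rw [hAs]
    by_cases h1 : (k:ℕ) = (l:ℕ)
    · rw [if_pos h1, if_pos h1.symm, if_neg (by omega), add_zero]
      simp only [Pm, Matrix.of_apply]
    · by_cases hc : (l:ℕ) = (k:ℕ)+1
      · rw [if_neg h1, if_pos hc, if_neg (fun h => h1 h.symm), if_pos hc, zero_add]
        simp only [Pm, Matrix.of_apply]
      · rw [if_neg h1, if_neg hc, if_neg (fun h => h1 h.symm), if_neg hc, zero_mul, add_zero]
  have hsumR : ∀ l : Fin (d+1), Pm d K k l * Tm d K l j =
      (if (l:ℕ)+1 = (j:ℕ) then peF K (k:ℕ) (l:ℕ) * ((d:K) - ((j:ℕ):K) + 1) else 0) +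
      (if (l:ℕ) = (j:ℕ)+1 then peF K (k:ℕ) (l:ℕ) * ((l:ℕ):K) else 0) := by
    intro l
    simp only [Pm, Tm, Matrix.of_apply]
    by_cases h1 : (l:ℕ)+1 = (j:ℕ)
    · rw [if_pos h1, if_pos h1, if_neg (by omega), add_zero]
    · by_cases hc : (l:ℕ) = (j:ℕ)+1
      · rw [if_neg h1, if_pos hc, if_neg h1, if_pos hc, zero_add]
      · rw [if_neg h1, if_neg hc, if_neg h1, if_neg hc, mul_zero, add_zero]
  rw [Finset.sum_congr rfl (fun l _ => hsumL l), Finset.sum_add_distrib,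
    sum_ite_coe, sum_ite_coe, dif_pos k.isLt]
  rw [Finset.sum_congr rfl (fun l _ => hsumR l), Finset.sum_add_distrib,
    sum_ite_coe (c := (j:ℕ)+1)]
  have hL2 : (if hc : (k:ℕ)+1 < d+1 then
        2*((d:K) - (((⟨(k:ℕ)+1, hc⟩ : Fin (d+1)):ℕ):K) + 1) *
          peF K ((⟨(k:ℕ)+1, hc⟩ : Fin (d+1)):ℕ) (j:ℕ) else 0)
      = 2*((d:K) - (((k:ℕ):K)+1) + 1) * peF K ((k:ℕ)+1) (j:ℕ) := by
    split_ifs with hc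
    · simp only [Fin.val_mk]
      push_cast
      ring
    · have hkd : (k:ℕ) = d := by have := k.isLt; omega
      rw [hkd]
      ring
  have hR2 : (if hc : (j:ℕ)+1 < d+1 then
        peF K (k:ℕ) ((⟨(j:ℕ)+1, hc⟩ : Fin (d+1)):ℕ) * (((⟨(j:ℕ)+1, hc⟩ : Fin (d+1)):ℕ):K) else 0)
      = peF K (k:ℕ) ((j:ℕ)+1) * (((j:ℕ):K)+1) := by
    split_ifs with hc
    · simp only [Fin.val_mk]
      push_cast
      ring
    · have hjd : (j:ℕ) = d := by have := j.isLt; omega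
      rw [hjd]
      have : peF K (k:ℕ) (d+1) = 0 := by
        simp [peF, Nat.choose_eq_zero_of_lt k.isLt]
      rw [this, zero_mul]
  rw [hL2, hR2]
  simp only [Fin.val_mk]
  cases hj : (j:ℕ) with
  | zero =>
      rw [Finset.sum_eq_zero (fun l _ => if_neg (by omega)), zero_add]
      push_cast
      linear_combination scalarK0 h2 (d:K) (k:ℕ)
  | succ m =>
      have hm : m < d + 1 := by have := j.isLt; omega
      simp only [add_left_inj]
      rw [sum_ite_coe, dif_pos hm]
      simp only [Fin.val_mk]
      push_cast
      linear_combination scalarK h2 (d:K) (k:ℕ) m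

lemma charpoly_lower {d : ℕ} (A : Matrix (Fin (d+1)) (Fin (d+1)) K)
    (hA : ∀ i j : Fin (d + 1), A i j =
      if (i : ℕ) = (j : ℕ) then (d : K) - 2 * ((i : ℕ) : K)
      else if (i : ℕ) = (j : ℕ) + 1 then -((i : ℕ) : K)
      else 0) :
    A.charpoly = ∏ i, (Polynomial.X - Polynomial.C (θf d K i)) := by
  have htri : A.charmatrix.BlockTriangular OrderDual.toDual := by
    intro i j hij
    have hij' : i < j := hij
    have hv : (i:ℕ) < (j:ℕ) := hij'
    rw [Matrix.charmatrix_apply_ne _ _ _ (ne_of_lt hij'), hA,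
      if_neg (by omega), if_neg (by omega)]
    simp
  rw [Matrix.charpoly, Matrix.det_of_lowerTriangular _ htri]
  refine Finset.prod_congr rfl fun i _ => ?_
  rw [Matrix.charmatrix_apply_eq, hA, if_pos rfl, θf]

lemma charpoly_upper {d : ℕ} (Astar : Matrix (Fin (d+1)) (Fin (d+1)) K)
    (hAs : ∀ i j : Fin (d + 1), Astar i j =
      if (i : ℕ) = (j : ℕ) then (d : K) - 2 * ((i : ℕ) : K)
      else if (j : ℕ) = (i : ℕ) + 1 then 2 * ((d : K) - ((j : ℕ) : K) + 1)
      else 0) :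
    Astar.charpoly = ∏ i, (Polynomial.X - Polynomial.C (θf d K i)) := by
  have htri : Astar.charmatrix.BlockTriangular id := by
    intro i j hij
    have hij' : j < i := hij
    have hv : (j:ℕ) < (i:ℕ) := hij'
    rw [Matrix.charmatrix_apply_ne _ _ _ (ne_of_gt hij'), hAs,
      if_neg (by omega), if_neg (by omega)]
    simp
  rw [Matrix.charpoly, Matrix.det_of_upperTriangular htri]
  refine Finset.prod_congr rfl fun i _ => ?_
  rw [Matrix.charmatrix_apply_eq, hAs, if_pos rfl, θf]

lemma Pm_det_ne_zero {d : ℕ} (h2 : (2:K) ≠ 0) : (Pm d K).det ≠ 0 := by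
  have htri : (Pm d K).BlockTriangular OrderDual.toDual := by
    intro i j hij
    have hij' : i < j := hij
    have hv : (i:ℕ) < (j:ℕ) := hij'
    simp [Pm, peF, Nat.choose_eq_zero_of_lt hv]
  rw [Matrix.det_of_lowerTriangular _ htri]
  apply Finset.prod_ne_zero_iff.mpr
  intro i _
  simp only [Pm, Matrix.of_apply, peF, Nat.choose_self, Nat.cast_one, mul_one]
  apply mul_ne_zero
  · apply pow_ne_zero
    exact neg_ne_zero.mpr one_ne_zero
  · exact pow_ne_zero _ (inv_ne_zero h2)

lemma theta_inj {d : ℕ} (h2 : (2:K) ≠ 0) (hnz : ∀ m : ℕ, 0 < m → m ≤ d → (m:K) ≠ 0) :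
    Function.Injective (θf d K) := by
  have hcast : ∀ a b : Fin (d+1), (a:ℕ) < (b:ℕ) → ((a:ℕ):K) ≠ ((b:ℕ):K) := by
    intro a b hab h
    have hsub : (((b:ℕ) - (a:ℕ) : ℕ):K) = 0 := by
      rw [Nat.cast_sub hab.le, h, sub_self]
    exact hnz ((b:ℕ) - (a:ℕ)) (by omega) (by have := b.isLt; omega) hsub
  intro i j h
  simp only [θf] at h
  have h' : ((i:ℕ):K) = ((j:ℕ):K) := by
    apply mul_left_cancel₀ h2
    linear_combination -h
  rcases lt_trichotomy ((i:ℕ)) ((j:ℕ)) with hlt | heq | hgt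
  · exact absurd h' (hcast i j hlt)
  · exact Fin.ext heq
  · exact absurd h'.symm (hcast j i hgt)

lemma Tm_zero {d : ℕ} (i j : Fin (d+1)) (h : 1 < |((i : ℕ) : ℤ) - ((j : ℕ) : ℤ)|) :
    Tm d K i j = 0 := by
  simp only [Tm, Matrix.of_apply]
  rcases lt_abs.mp h with h' | h' <;>
    rw [if_neg (by omega), if_neg (by omega)]

lemma Tm_ne_zero {d : ℕ} (h2 : (2:K) ≠ 0) (hnz : ∀ m : ℕ, 0 < m → m ≤ d → (m:K) ≠ 0)
    (i j : Fin (d+1)) (h : |((i : ℕ) : ℤ) - ((j : ℕ) : ℤ)| = 1) :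
    Tm d K i j ≠ 0 := by
  simp only [Tm, Matrix.of_apply]
  rcases (abs_eq (by norm_num : (0:ℤ) ≤ 1)).mp h with h' | h'
  · -- i = j + 1
    rw [if_neg (by omega), if_pos (by omega)]
    exact hnz (i:ℕ) (by omega) (by have := i.isLt; omega)
  · -- j = i + 1
    rw [if_pos (by omega)]
    have hj1 : 1 ≤ (j:ℕ) := by omega
    have hjd : (j:ℕ) ≤ d := by have := j.isLt; omega
    have : ((d:K) - ((j:ℕ):K) + 1) = ((d - (j:ℕ) + 1 : ℕ) : K) := by
      push_cast [Nat.cast_sub hjd]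
      ring
    rw [this]
    exact hnz (d - (j:ℕ) + 1) (by omega) (by omega)

lemma swap_side {n : Type*} [Fintype n] [DecidableEq n]
    (P M N : Matrix n n K) [Invertible P] (h : M * P = P * N) : ⅟P * M = N * ⅟P := by
  calc ⅟P * M = ⅟P * M * (P * ⅟P) := by rw [mul_invOf_self, Matrix.mul_one]
    _ = ⅟P * (M * P) * ⅟P := by simp only [Matrix.mul_assoc]
    _ = ⅟P * (P * N) * ⅟P := by rw [h]
    _ = N * ⅟P := by rw [← Matrix.mul_assoc, invOf_mul_self, Matrix.one_mul]

noncomputable def δf (d : ℕ) (K : Type*) [Field K] : Fin (d+1) → K :=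
  fun jj => ∏ m ∈ Finset.range (jj:ℕ), (-(((m:ℕ):K)+1) * (2*((d:K) - (m:K)))⁻¹)

lemma δf_ne_zero {d : ℕ} (h2 : (2:K) ≠ 0) (hnz : ∀ m : ℕ, 0 < m → m ≤ d → (m:K) ≠ 0)
    (jj : Fin (d+1)) : δf d K jj ≠ 0 := by
  rw [δf]
  apply Finset.prod_ne_zero_iff.mpr
  intro m hm
  have hmj : m < (jj:ℕ) := Finset.mem_range.mp hm
  have hmd : m + 1 ≤ d := by have := jj.isLt; omega
  apply mul_ne_zero
  · apply neg_ne_zero.mpr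
    have : (((m:ℕ)):K) + 1 = ((m+1 : ℕ):K) := by push_cast; ring
    rw [this]
    exact hnz (m+1) (by omega) hmd
  · apply inv_ne_zero
    apply mul_ne_zero h2
    have hmd' : m ≤ d := by omega
    have : ((d:K) - (m:K)) = ((d - m : ℕ) : K) := by
      rw [Nat.cast_sub hmd']
    rw [this]
    exact hnz (d - m) (by omega) (by omega)

lemma conj_lemma {d : ℕ} (h2 : (2:K) ≠ 0) (hnz : ∀ m : ℕ, 0 < m → m ≤ d → (m:K) ≠ 0)
    (A Astar : Matrix (Fin (d+1)) (Fin (d+1)) K)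
    (hA : ∀ i j : Fin (d + 1), A i j =
      if (i : ℕ) = (j : ℕ) then (d : K) - 2 * ((i : ℕ) : K)
      else if (i : ℕ) = (j : ℕ) + 1 then -((i : ℕ) : K)
      else 0)
    (hAs : ∀ i j : Fin (d + 1), Astar i j =
      if (i : ℕ) = (j : ℕ) then (d : K) - 2 * ((i : ℕ) : K)
      else if (j : ℕ) = (i : ℕ) + 1 then 2 * ((d : K) - ((j : ℕ) : K) + 1)
      else 0) :
    Astar = Matrix.diagonal (δf d K) * Aᵀ * Matrix.diagonal (fun j => (δf d K j)⁻¹) := by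
  ext k l
  rw [Matrix.mul_diagonal, Matrix.diagonal_mul, Matrix.transpose_apply, hAs, hA]
  by_cases h1 : (k:ℕ) = (l:ℕ)
  · have : k = l := Fin.ext h1
    subst this
    rw [if_pos rfl, if_pos rfl]
    rw [mul_comm (δf d K k), mul_assoc, mul_inv_cancel₀ (δf_ne_zero h2 hnz k), mul_one]
  · by_cases hc : (l:ℕ) = (k:ℕ)+1
    · rw [if_neg h1, if_pos hc, if_neg (fun h => h1 h.symm), if_pos hc]
      have hld : (l:ℕ) ≤ d := by have := l.isLt; omega
      have hkd : (k:ℕ) ≤ d := by omega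
      have hdl : δf d K l = δf d K k * (-(((k:ℕ):K)+1) * (2*((d:K) - ((k:ℕ):K)))⁻¹) := by
        rw [δf, δf, hc, Finset.prod_range_succ]
      have hb : -(((k:ℕ):K)+1) ≠ 0 := by
        apply neg_ne_zero.mpr
        have : (((k:ℕ)):K) + 1 = (((k:ℕ)+1 : ℕ):K) := by push_cast; ring
        rw [this]
        exact hnz ((k:ℕ)+1) (by omega) (by omega)
      have hdk : (k:ℕ) < d := by omega
      have hcc : 2*((d:K) - ((k:ℕ):K)) ≠ 0 := by
        apply mul_ne_zero h2
        have : ((d:K) - ((k:ℕ):K)) = ((d - (k:ℕ) : ℕ) : K) := by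
          rw [Nat.cast_sub hkd]
        rw [this]
        exact hnz (d - (k:ℕ)) (by omega) (by omega)
      have hδk := δf_ne_zero h2 hnz (K := K) (d := d) k
      have hlc : ((l:ℕ):K) = ((k:ℕ):K) + 1 := by rw [hc]; push_cast; ring
      have key : ∀ (a b c : K), a ≠ 0 → b ≠ 0 → c ≠ 0 →
          a * (-b) * (a * (-b * c⁻¹))⁻¹ = c := by
        intro a b c ha hb hc'
        field_simp
      rw [hdl, hlc, key _ _ _ hδk (neg_ne_zero.mp hb) hcc]
      ring
    · rw [if_neg h1, if_neg hc, if_neg (fun h => h1 h.symm), if_neg hc, mul_zero, zero_mul]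

/-- an explicit lower bidiagonal / upper bidiagonal Leonard pair. -/
theorem example_lbub_leonard_pair {d : ℕ}
    (hchar : CharZero K ∨ ∃ p, p.Prime ∧ Odd p ∧ d < p ∧ CharP K p)
    (A Astar : Matrix (Fin (d + 1)) (Fin (d + 1)) K)
    (hA : ∀ i j : Fin (d + 1), A i j =
      if (i : ℕ) = (j : ℕ) then (d : K) - 2 * ((i : ℕ) : K)
      else if (i : ℕ) = (j : ℕ) + 1 then -((i : ℕ) : K)
      else 0)
    (hAs : ∀ i j : Fin (d + 1), Astar i j =
      if (i : ℕ) = (j : ℕ) then (d : K) - 2 * ((i : ℕ) : K)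
      else if (j : ℕ) = (i : ℕ) + 1 then 2 * ((d : K) - ((j : ℕ) : K) + 1)
      else 0) :
    IsLeonardPair A Astar := by
  -- characteristic facts
  have hch : ((2:K) ≠ 0) ∧ ∀ m : ℕ, 0 < m → m ≤ d → (m:K) ≠ 0 := by
    rcases hchar with hc | ⟨p, hp, hodd, hdp, hcp⟩
    · refine ⟨?_, fun m hm _ => Nat.cast_ne_zero.mpr (by omega)⟩
      norm_num
    · haveI := hcp
      have hp2 : 2 < p := by
        have h1 := hp.two_le
        have h2 := Nat.odd_iff.mp hodd
        omega
      constructor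
      · intro h
        have h' : ((2:ℕ):K) = 0 := by exact_mod_cast h
        have hd := (CharP.cast_eq_zero_iff K p 2).mp h'
        have := Nat.le_of_dvd (by norm_num) hd
        omega
      · intro m hm hmd h
        have hd := (CharP.cast_eq_zero_iff K p m).mp h
        have := Nat.le_of_dvd hm hd
        omega
  obtain ⟨h2, hnz⟩ := hch
  haveI : Invertible (Pm d K) :=
    Matrix.invertibleOfIsUnitDet _ (isUnit_iff_ne_zero.mpr (Pm_det_ne_zero h2))
  have hinj := theta_inj (K := K) (d := d) h2 hnz
  have hAP := hAP_lemma h2 A hA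
  have hAsP := hAsP_lemma h2 Astar hAs
  have S1 : IsEigenvalueSeq A Astar (θf d K) :=
    isEigenvalueSeq_of A Astar (Pm d K) (Tm d K) (θf d K) hinj (charpoly_lower A hA)
      hAP hAsP (fun i j h => Tm_zero i j h) (fun i j h => Tm_ne_zero h2 hnz i j h)
  -- the diagonal conjugating matrix
  have hDDinv : Matrix.diagonal (δf d K) * Matrix.diagonal (fun j => (δf d K j)⁻¹) = 1 := by
    rw [Matrix.diagonal_mul_diagonal]
    rw [show (fun j => δf d K j * (δf d K j)⁻¹) = fun _ => (1:K) from
      funext fun j => mul_inv_cancel₀ (δf_ne_zero h2 hnz j)]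
    exact Matrix.diagonal_one
  have hDinvD : Matrix.diagonal (fun j => (δf d K j)⁻¹) * Matrix.diagonal (δf d K) = 1 := by
    rw [Matrix.diagonal_mul_diagonal]
    rw [show (fun j => (δf d K j)⁻¹ * δf d K j) = fun _ => (1:K) from
      funext fun j => inv_mul_cancel₀ (δf_ne_zero h2 hnz j)]
    exact Matrix.diagonal_one
  have hconj := conj_lemma h2 hnz A Astar hA hAs
  have hcancel : ∀ M : Matrix (Fin (d+1)) (Fin (d+1)) K,
      Matrix.diagonal (δf d K) * (Matrix.diagonal (fun j => (δf d K j)⁻¹) * M *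
        Matrix.diagonal (δf d K)) * Matrix.diagonal (fun j => (δf d K j)⁻¹) = M := by
    intro M
    calc Matrix.diagonal (δf d K) * (Matrix.diagonal (fun j => (δf d K j)⁻¹) * M *
          Matrix.diagonal (δf d K)) * Matrix.diagonal (fun j => (δf d K j)⁻¹)
        = Matrix.diagonal (δf d K) * (Matrix.diagonal (fun j => (δf d K j)⁻¹) * (M *
            (Matrix.diagonal (δf d K) * Matrix.diagonal (fun j => (δf d K j)⁻¹)))) := by
          simp only [Matrix.mul_assoc]
      _ = M := by
          rw [hDDinv, Matrix.mul_one, ← Matrix.mul_assoc, hDDinv, Matrix.one_mul]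
  have htrans : Astarᵀ = Matrix.diagonal (fun j => (δf d K j)⁻¹) * A *
      Matrix.diagonal (δf d K) := by
    rw [hconj, Matrix.transpose_mul, Matrix.transpose_mul, Matrix.transpose_transpose,
      Matrix.diagonal_transpose, Matrix.diagonal_transpose]
    simp only [Matrix.mul_assoc]
  have hAconj : A = Matrix.diagonal (δf d K) * Astarᵀ *
      Matrix.diagonal (fun j => (δf d K j)⁻¹) := by
    rw [htrans]
    exact (hcancel A).symm
  haveI : Invertible (Matrix.diagonal (δf d K) * (⅟(Pm d K))ᵀ) :=
    ⟨(Pm d K)ᵀ * Matrix.diagonal (fun j => (δf d K j)⁻¹), by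
      calc ((Pm d K)ᵀ * Matrix.diagonal (fun j => (δf d K j)⁻¹)) *
            (Matrix.diagonal (δf d K) * (⅟(Pm d K))ᵀ)
          = (Pm d K)ᵀ * ((Matrix.diagonal (fun j => (δf d K j)⁻¹) *
              Matrix.diagonal (δf d K)) * (⅟(Pm d K))ᵀ) := by simp only [Matrix.mul_assoc]
        _ = (Pm d K)ᵀ * (⅟(Pm d K))ᵀ := by rw [hDinvD, Matrix.one_mul]
        _ = 1 := by rw [← Matrix.transpose_mul, invOf_mul_self, Matrix.transpose_one], by
      calc (Matrix.diagonal (δf d K) * (⅟(Pm d K))ᵀ) *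
            ((Pm d K)ᵀ * Matrix.diagonal (fun j => (δf d K j)⁻¹))
          = Matrix.diagonal (δf d K) * (((⅟(Pm d K))ᵀ * (Pm d K)ᵀ) *
              Matrix.diagonal (fun j => (δf d K j)⁻¹)) := by simp only [Matrix.mul_assoc]
        _ = Matrix.diagonal (δf d K) * Matrix.diagonal (fun j => (δf d K j)⁻¹) := by
            rw [← Matrix.transpose_mul, mul_invOf_self, Matrix.transpose_one, Matrix.one_mul]
        _ = 1 := hDDinv⟩
  have hs1 : ⅟(Pm d K) * A = Matrix.diagonal (θf d K) * ⅟(Pm d K) :=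
    swap_side _ _ _ hAP
  have hs2 : ⅟(Pm d K) * Astar = Tm d K * ⅟(Pm d K) :=
    swap_side _ _ _ hAsP
  have hAsP2 : Astar * (Matrix.diagonal (δf d K) * (⅟(Pm d K))ᵀ) =
      (Matrix.diagonal (δf d K) * (⅟(Pm d K))ᵀ) * Matrix.diagonal (θf d K) := by
    calc Astar * (Matrix.diagonal (δf d K) * (⅟(Pm d K))ᵀ)
        = (Matrix.diagonal (δf d K) * Aᵀ * Matrix.diagonal (fun j => (δf d K j)⁻¹)) *
            (Matrix.diagonal (δf d K) * (⅟(Pm d K))ᵀ) := by rw [← hconj]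
      _ = Matrix.diagonal (δf d K) * (Aᵀ * ((Matrix.diagonal (fun j => (δf d K j)⁻¹) *
            Matrix.diagonal (δf d K)) * (⅟(Pm d K))ᵀ)) := by simp only [Matrix.mul_assoc]
      _ = Matrix.diagonal (δf d K) * (Aᵀ * (⅟(Pm d K))ᵀ) := by
          rw [hDinvD, Matrix.one_mul]
      _ = Matrix.diagonal (δf d K) * (⅟(Pm d K) * A)ᵀ := by rw [Matrix.transpose_mul]
      _ = Matrix.diagonal (δf d K) * (Matrix.diagonal (θf d K) * ⅟(Pm d K))ᵀ := by rw [hs1]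
      _ = Matrix.diagonal (δf d K) * ((⅟(Pm d K))ᵀ * Matrix.diagonal (θf d K)) := by
          rw [Matrix.transpose_mul, Matrix.diagonal_transpose]
      _ = (Matrix.diagonal (δf d K) * (⅟(Pm d K))ᵀ) * Matrix.diagonal (θf d K) := by
          simp only [Matrix.mul_assoc]
  have hAP2 : A * (Matrix.diagonal (δf d K) * (⅟(Pm d K))ᵀ) =
      (Matrix.diagonal (δf d K) * (⅟(Pm d K))ᵀ) * (Tm d K)ᵀ := by
    calc A * (Matrix.diagonal (δf d K) * (⅟(Pm d K))ᵀ)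
        = (Matrix.diagonal (δf d K) * Astarᵀ * Matrix.diagonal (fun j => (δf d K j)⁻¹)) *
            (Matrix.diagonal (δf d K) * (⅟(Pm d K))ᵀ) := by rw [← hAconj]
      _ = Matrix.diagonal (δf d K) * (Astarᵀ * ((Matrix.diagonal (fun j => (δf d K j)⁻¹) *
            Matrix.diagonal (δf d K)) * (⅟(Pm d K))ᵀ)) := by simp only [Matrix.mul_assoc]
      _ = Matrix.diagonal (δf d K) * (Astarᵀ * (⅟(Pm d K))ᵀ) := by
          rw [hDinvD, Matrix.one_mul]
      _ = Matrix.diagonal (δf d K) * (⅟(Pm d K) * Astar)ᵀ := by rw [Matrix.transpose_mul]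
      _ = Matrix.diagonal (δf d K) * (Tm d K * ⅟(Pm d K))ᵀ := by rw [hs2]
      _ = Matrix.diagonal (δf d K) * ((⅟(Pm d K))ᵀ * (Tm d K)ᵀ) := by
          rw [Matrix.transpose_mul]
      _ = (Matrix.diagonal (δf d K) * (⅟(Pm d K))ᵀ) * (Tm d K)ᵀ := by
          simp only [Matrix.mul_assoc]
  have S2 : IsEigenvalueSeq Astar A (θf d K) :=
    isEigenvalueSeq_of Astar A (Matrix.diagonal (δf d K) * (⅟(Pm d K))ᵀ) (Tm d K)ᵀ
      (θf d K) hinj (charpoly_upper Astar hAs) hAsP2 hAP2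
      (fun i j h => Tm_zero j i (by rw [abs_sub_comm] at h; exact h))
      (fun i j h => Tm_ne_zero h2 hnz j i (by rw [abs_sub_comm] at h; exact h))
  exact ⟨⟨_, S1⟩, ⟨_, S2⟩⟩
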